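/- Let φ: Λ → Γ be an injection of finitely generated residually finite groups inducing an isomorphism on profinite completions. If G is a group such that precomposition with φ gives a bijection Hom(Γ, G) → Hom(Λ, G), and H ≤ G has finite index, then precomposition with φ gives an injection Hom(Γ, H) → Hom(Λ, H), and moreover every homomorphism Λ → H extends to a homomorphism Γ → H (surjectivity), using that the image of Λ is dense in the profinite topology of the image of the extension. -/

import Mathlib

/-- The index type of finite quotients: finite-index normal subgroups. -/
def FinQuot (G : Type*) [Group G] : Type _ :=
  {N : Subgroup G // N.Normal ∧ N.FiniteIndex}

instance {G : Type*} [Group G] (N : FinQuot G) : N.1.Normal := N.2.1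
instance {G : Type*} [Group G] (N : FinQuot G) : N.1.FiniteIndex := N.2.2

instance {G : Type*} [Group G] (N : FinQuot G) : TopologicalSpace (G ⧸ N.1) := ⊥

/-- The subgroup of compatible families in the product of all finite quotients. -/
def profCompat (G : Type*) [Group G] : Subgroup (Π N : FinQuot G, G ⧸ N.1) where
  carrier := {x | ∀ (N M : FinQuot G) (h : N.1 ≤ M.1),
    QuotientGroup.map N.1 M.1 (MonoidHom.id G) (by simpa using h) (x N) = x M}
  one_mem' := by intro N M h; simp
  mul_mem' := by
    intro a b ha hb N M h
    simp only [Pi.mul_apply, map_mul, ha N M h, hb N M h]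
  inv_mem' := by
    intro a ha N M h
    simp only [Pi.inv_apply, map_inv, ha N M h]

/-- The profinite completion of a group, as the inverse limit of its finite quotients. -/
def ProfComp (G : Type*) [Group G] : Type _ := profCompat G

instance {G : Type*} [Group G] : Group (ProfComp G) :=
  inferInstanceAs (Group (profCompat G))

instance {G : Type*} [Group G] : TopologicalSpace (ProfComp G) :=
  inferInstanceAs (TopologicalSpace {x : Π N : FinQuot G, G ⧸ N.1 // x ∈ profCompat G})

/-- The canonical map from a group to its profinite completion. -/
def toProf (G : Type*) [Group G] : G →* ProfComp G where
  toFun g := ⟨fun N => QuotientGroup.mk g, by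
    intro N M h
    simp [QuotientGroup.map_mk]⟩
  map_one' := by apply Subtype.ext; funext N; rfl
  map_mul' a b := by apply Subtype.ext; funext N; rfl

/-- The pullback of a finite-index normal subgroup along a homomorphism. -/
def pullFQ {Λ Γ : Type*} [Group Λ] [Group Γ] (φ : Λ →* Γ) (N : FinQuot Γ) : FinQuot Λ :=
  ⟨N.1.comap φ, N.2.1.comap φ, ⟨by
    refine ne_zero_of_dvd_ne_zero N.2.2.index_ne_zero ?_
    rw [Subgroup.index_comap]
    exact Subgroup.relIndex_dvd_index_of_normal N.1 φ.range⟩⟩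

/-- The induced homomorphism between profinite completions. -/
def profMap {Λ Γ : Type*} [Group Λ] [Group Γ] (φ : Λ →* Γ) :
    ProfComp Λ →* ProfComp Γ where
  toFun x := ⟨fun N => QuotientGroup.map (pullFQ φ N).1 N.1 φ le_rfl (x.1 (pullFQ φ N)), by
    intro N M h
    obtain ⟨g, hg⟩ := QuotientGroup.mk_surjective (x.1 (pullFQ φ N))
    have hx := x.2 (pullFQ φ N) (pullFQ φ M) (Subgroup.comap_mono h)
    show QuotientGroup.map _ _ _ _
        (QuotientGroup.map _ _ φ _ (x.1 (pullFQ φ N))) =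
      QuotientGroup.map _ _ φ _ (x.1 (pullFQ φ M))
    rw [← hx, ← hg]
    rfl⟩
  map_one' := by
    apply Subtype.ext
    funext N
    show QuotientGroup.map _ _ φ _ ((1 : ProfComp Λ).1 (pullFQ φ N)) = _
    rw [show ((1 : ProfComp Λ).1 (pullFQ φ N)) = 1 from rfl, map_one]
    rfl
  map_mul' a b := by
    apply Subtype.ext
    funext N
    show QuotientGroup.map _ _ _ _ ((a * b).1 (pullFQ φ N)) = _
    have : (a * b).1 (pullFQ φ N) = a.1 (pullFQ φ N) * b.1 (pullFQ φ N) := rfl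
    rw [this, map_mul]
    rfl

/-- A group is residually finite if every nontrivial element survives in some finite
quotient. -/
def ResiduallyFinite (G : Type*) [Group G] : Prop :=
  ∀ g : G, g ≠ 1 → ∃ N : Subgroup G, N.Normal ∧ N.FiniteIndex ∧ g ∉ N

/-- Let `φ : Λ → Γ` be a Grothendieck pair and `G` a group for which precomposition
with `φ` is a bijection `Hom(Γ, G) → Hom(Λ, G)`.  Then for every finite-index subgroup
`H ≤ G`, precomposition with `φ` is injective on `Hom(Γ, H)` and every homomorphism
`Λ → H` extends to a homomorphism `Γ → H`. -/

private lemma dense_of_profMap_surjective {Λ Γ : Type*} [Group Λ] [Group Γ] (φ : Λ →* Γ)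
    (hGP : Function.Surjective (profMap φ)) (K : Subgroup Γ) (hK : K.FiniteIndex)
    (hle : φ.range ≤ K) : K = ⊤ := by
  haveI := hK
  set N : FinQuot Γ := ⟨K.normalCore, inferInstance, inferInstance⟩ with hN
  rw [eq_top_iff]
  intro γ _
  obtain ⟨x, hx⟩ := hGP (toProf Γ γ)
  have hcoord : (profMap φ x).1 N = (toProf Γ γ).1 N := by rw [hx]
  obtain ⟨l, hl⟩ := QuotientGroup.mk_surjective (x.1 (pullFQ φ N))
  have : QuotientGroup.map (pullFQ φ N).1 N.1 φ le_rfl (x.1 (pullFQ φ N)) =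
      QuotientGroup.mk γ := hcoord
  rw [← hl] at this
  change ((φ l : Γ) : Γ ⧸ K.normalCore) = (γ : Γ ⧸ K.normalCore) at this
  have hmem : (φ l)⁻¹ * γ ∈ K.normalCore := (QuotientGroup.eq).mp this
  have hφl : φ l ∈ K := hle ⟨l, rfl⟩
  have := K.mul_mem hφl (K.normalCore_le hmem)
  simpa using this

theorem grothendieckPair_finiteIndex_subgroup {Λ Γ G : Type*} [Group Λ] [Group Γ]
    [Group G] (hΛfg : Group.FG Λ) (hΓfg : Group.FG Γ)
    (hΛrf : ResiduallyFinite Λ) (hΓrf : ResiduallyFinite Γ)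
    (φ : Λ →* Γ) (hφinj : Function.Injective φ)
    (hGP : Function.Bijective (profMap φ))
    (hG : Function.Bijective fun τ : Γ →* G => τ.comp φ)
    (H : Subgroup G) (hH : H.FiniteIndex) :
    Function.Injective (fun τ : Γ →* H => τ.comp φ) ∧
    ∀ ψ : Λ →* H, ∃ τ : Γ →* H, τ.comp φ = ψ := by
  constructor
  · intro τ₁ τ₂ h
    have h' : (H.subtype.comp τ₁).comp φ = (H.subtype.comp τ₂).comp φ := by
      rw [MonoidHom.comp_assoc, MonoidHom.comp_assoc]
      exact congrArg H.subtype.comp h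
    have := hG.1 h'
    ext γ
    exact DFunLike.congr_fun this γ
  · intro ψ
    obtain ⟨τ, hτ⟩ := hG.2 (H.subtype.comp ψ)
    have hle : φ.range ≤ H.comap τ := by
      rintro _ ⟨l, rfl⟩
      have : τ (φ l) = ψ l := DFunLike.congr_fun hτ l
      simp [Subgroup.mem_comap, this]
    have hfi : (H.comap τ).FiniteIndex := by
      constructor
      rw [Subgroup.index_comap]
      intro h0
      have := Subgroup.relIndex_eq_zero_of_le_right (le_top : τ.range ≤ ⊤) h0
      rw [Subgroup.relIndex_top_right] at this
      exact hH.index_ne_zero this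
    have htop : H.comap τ = ⊤ := dense_of_profMap_surjective φ hGP.2 _ hfi hle
    refine ⟨τ.codRestrict H (fun γ => ?_), ?_⟩
    · have : γ ∈ H.comap τ := htop ▸ Subgroup.mem_top γ
      exact this
    · ext l
      have : τ (φ l) = ψ l := DFunLike.congr_fun hτ l
      exact this
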